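/- arXiv:2506.23129 — 2 statements merged into one kernel-verified Lean document; each statement's English description precedes it below -/
import Mathlib

section
/- Let n, m be positive integers, A an n×n real matrix, B an n×m real matrix, Q and Q_f symmetric positive semidefinite n×n real matrices, R a symmetric positive definite m×m real matrix, t_f > 0 a real number, and r₀ ∈ ℝⁿ. Define the 2n×2n Hamiltonian matrix M = [[A, −B R⁻¹ Bᵀ], [−Q, −Aᵀ]], and for t ∈ ℝ define H(t) = [I 0]·exp(−t M)·[I; Q_f] and G(t) = [0 I]·exp(−t M)·[I; Q_f] (the upper and lower n×n blocks of exp(−tM)·[I; Q_f]). Assume H(t_f) is invertible. Then the curves r(t) = H(t_f − t)·H(t_f)⁻¹·r₀ and ψ(t) = G(t_f − t)·H(t_f)⁻¹·r₀ satisfy, for all t ∈ [0, t_f], the two-point boundary value system r'(t) = A r(t) − B R⁻¹ Bᵀ ψ(t), ψ'(t) = −Q r(t) − Aᵀ ψ(t), together with the boundary conditions r(0) = r₀ and ψ(t_f) = Q_f r(t_f). -/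
open Matrix

section Aux

attribute [local instance]
  Matrix.linftyOpNormedAddCommGroup Matrix.linftyOpNormedSpace
  Matrix.linftyOpNormedRing Matrix.linftyOpNormedAlgebra

/-- Derivative of `t ↦ (P * exp(-((tf - t) • M)) * C).mulVec r₀`. -/
lemma aux_hasDerivAt {l : Type*} [Fintype l] [DecidableEq l] (n : ℕ)
    (M : Matrix l l ℝ) (P : Matrix (Fin n) l ℝ) (C : Matrix l (Fin n) ℝ)
    (r₀ : Fin n → ℝ) (tf t : ℝ) :
    HasDerivAt (fun s : ℝ => (P * NormedSpace.exp (-((tf - s) • M)) * C).mulVec r₀)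
      ((P * (M * NormedSpace.exp (-((tf - t) • M))) * C).mulVec r₀) t := by
  have h1 : ∀ s : ℝ, -((tf - s) • M) = (s - tf) • M := by
    intro s
    rw [← neg_smul]
    congr 1
    ring
  have hexp : HasDerivAt (fun s : ℝ => NormedSpace.exp ((s - tf) • M))
      (M * NormedSpace.exp ((t - tf) • M)) t := by
    have hg := hasDerivAt_exp_smul_const' (𝕂 := ℝ) M (t - tf)
    have hf : HasDerivAt (fun s : ℝ => s - tf) 1 t := (hasDerivAt_id t).sub_const tf
    exact (HasDerivAt.scomp (x := t) hg hf).congr_deriv (one_smul _ _)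
  let L : Matrix l l ℝ →ₗ[ℝ] (Fin n → ℝ) :=
    { toFun := fun X => (P * X * C).mulVec r₀
      map_add' := by
        intro X Y
        simp [Matrix.mul_add, Matrix.add_mul, Matrix.add_mulVec]
      map_smul' := by
        intro c X
        simp [Matrix.mul_smul, Matrix.smul_mul, Matrix.smul_mulVec] }
  have hL := (LinearMap.toContinuousLinearMap L).hasFDerivAt
    (x := NormedSpace.exp ((t - tf) • M))
  have := hL.comp_hasDerivAt t hexp
  simp only [h1]
  exact this.congr_deriv rfl

end Aux

/-- The curves `r(t) = H(t_f − t) H(t_f)⁻¹ r₀` and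
`ψ(t) = G(t_f − t) H(t_f)⁻¹ r₀`, built from the Hamiltonian matrix
`M = [[A, −B R⁻¹ Bᵀ], [−Q, −Aᵀ]]` via `H(t) = [I 0] exp(−tM) [I; Q_f]` and
`G(t) = [0 I] exp(−tM) [I; Q_f]`, solve the state/costate two-point boundary
value problem of the finite-horizon LQ formation planning problem. -/
theorem stmt_0 (n m : ℕ) (hn : 0 < n) (hm : 0 < m)
    (A : Matrix (Fin n) (Fin n) ℝ) (B : Matrix (Fin n) (Fin m) ℝ)
    (Q Qf : Matrix (Fin n) (Fin n) ℝ) (R : Matrix (Fin m) (Fin m) ℝ)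
    (hQ : Q.PosSemidef) (hQf : Qf.PosSemidef) (hR : R.PosDef)
    (tf : ℝ) (htf : 0 < tf) (r₀ : Fin n → ℝ)
    (M : Matrix (Fin n ⊕ Fin n) (Fin n ⊕ Fin n) ℝ)
    (hM : M = Matrix.fromBlocks A (-(B * R⁻¹ * Bᵀ)) (-Q) (-Aᵀ))
    (H G : ℝ → Matrix (Fin n) (Fin n) ℝ)
    (hH : ∀ t : ℝ, H t =
      Matrix.fromCols (1 : Matrix (Fin n) (Fin n) ℝ) (0 : Matrix (Fin n) (Fin n) ℝ) *
        NormedSpace.exp (-(t • M)) * Matrix.fromRows (1 : Matrix (Fin n) (Fin n) ℝ) Qf)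
    (hG : ∀ t : ℝ, G t =
      Matrix.fromCols (0 : Matrix (Fin n) (Fin n) ℝ) (1 : Matrix (Fin n) (Fin n) ℝ) *
        NormedSpace.exp (-(t • M)) * Matrix.fromRows (1 : Matrix (Fin n) (Fin n) ℝ) Qf)
    (hHtf : IsUnit (H tf))
    (r ψ : ℝ → Fin n → ℝ)
    (hr : ∀ t : ℝ, r t = (H (tf - t) * (H tf)⁻¹).mulVec r₀)
    (hψ : ∀ t : ℝ, ψ t = (G (tf - t) * (H tf)⁻¹).mulVec r₀) :
    (∀ t ∈ Set.Icc (0 : ℝ) tf,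
        HasDerivAt r (A.mulVec (r t) - (B * R⁻¹ * Bᵀ).mulVec (ψ t)) t) ∧
    (∀ t ∈ Set.Icc (0 : ℝ) tf,
        HasDerivAt ψ (-(Q.mulVec (r t)) - Aᵀ.mulVec (ψ t)) t) ∧
    r 0 = r₀ ∧ ψ tf = Qf.mulVec (r tf) := by
  set S : Matrix (Fin n) (Fin n) ℝ := B * R⁻¹ * Bᵀ with hS
  set P1 : Matrix (Fin n) (Fin n ⊕ Fin n) ℝ := fromCols 1 0 with hP1
  set P2 : Matrix (Fin n) (Fin n ⊕ Fin n) ℝ := fromCols 0 1 with hP2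
  set C : Matrix (Fin n ⊕ Fin n) (Fin n) ℝ := fromRows 1 Qf * (H tf)⁻¹ with hC
  set E : ℝ → Matrix (Fin n ⊕ Fin n) (Fin n ⊕ Fin n) ℝ :=
    fun s => NormedSpace.exp (-((tf - s) • M)) with hE
  -- express r and ψ in the canonical form
  have hr' : ∀ t : ℝ, r t = (P1 * E t * C).mulVec r₀ := by
    intro t
    rw [hr t, hH (tf - t), hC]
    rw [Matrix.mul_assoc, Matrix.mul_assoc]
  have hψ' : ∀ t : ℝ, ψ t = (P2 * E t * C).mulVec r₀ := by
    intro t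
    rw [hψ t, hG (tf - t), hC]
    rw [Matrix.mul_assoc, Matrix.mul_assoc]
  -- key splitting lemma
  have key : ∀ (U V : Matrix (Fin n) (Fin n) ℝ) (Y : Matrix (Fin n ⊕ Fin n) (Fin n) ℝ),
      fromCols U V * Y = U * Y.toRows₁ + V * Y.toRows₂ := by
    intro U V Y
    conv_lhs => rw [← fromRows_toRows Y]
    rw [fromCols_mul_fromRows]
  have hP1M : P1 * M = fromCols A (-S) := by
    rw [hP1, hM, fromCols_mul_fromBlocks]
    simp
  have hP2M : P2 * M = fromCols (-Q) (-Aᵀ) := by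
    rw [hP2, hM, fromCols_mul_fromBlocks]
    simp
  have hrY : ∀ t : ℝ, r t = ((E t * C).toRows₁).mulVec r₀ := by
    intro t
    rw [hr' t, Matrix.mul_assoc, key]
    simp [hP1]
  have hψY : ∀ t : ℝ, ψ t = ((E t * C).toRows₂).mulVec r₀ := by
    intro t
    rw [hψ' t, Matrix.mul_assoc, key]
    simp [hP2]
  refine ⟨?_, ?_, ?_, ?_⟩
  · intro t _
    have hd := aux_hasDerivAt n M P1 C r₀ tf t
    have heq : (P1 * (M * E t) * C).mulVec r₀
        = A.mulVec (r t) - S.mulVec (ψ t) := by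
      rw [← Matrix.mul_assoc P1 M (E t), hP1M, Matrix.mul_assoc, key,
        hrY t, hψY t, Matrix.add_mulVec, ← Matrix.mulVec_mulVec, ← Matrix.mulVec_mulVec]
      simp [Matrix.neg_mulVec, sub_eq_add_neg]
    rw [← heq]
    have hfun : r = fun s : ℝ => (P1 * NormedSpace.exp (-((tf - s) • M)) * C).mulVec r₀ := by
      funext s
      rw [hr' s]
    rw [hfun]
    exact hd
  · intro t _
    have hd := aux_hasDerivAt n M P2 C r₀ tf t
    have heq : (P2 * (M * E t) * C).mulVec r₀
        = -(Q.mulVec (r t)) - Aᵀ.mulVec (ψ t) := by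
      rw [← Matrix.mul_assoc P2 M (E t), hP2M, Matrix.mul_assoc, key,
        hrY t, hψY t, Matrix.add_mulVec, ← Matrix.mulVec_mulVec, ← Matrix.mulVec_mulVec]
      simp [Matrix.neg_mulVec, sub_eq_add_neg]
    rw [← heq]
    have hfun : ψ = fun s : ℝ => (P2 * NormedSpace.exp (-((tf - s) • M)) * C).mulVec r₀ := by
      funext s
      rw [hψ' s]
    rw [hfun]
    exact hd
  · rw [hr 0]
    simp only [sub_zero]
    rw [Matrix.mul_nonsing_inv _ ((Matrix.isUnit_iff_isUnit_det _).mp hHtf), Matrix.one_mulVec]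
  · have hG0 : G (tf - tf) = Qf := by
      rw [hG]
      simp only [sub_self, zero_smul, neg_zero, NormedSpace.exp_zero, Matrix.mul_one, hP2,
        fromCols_mul_fromRows, Matrix.zero_mul, Matrix.one_mul, zero_add]
    have hH0 : H (tf - tf) = 1 := by
      rw [hH]
      simp only [sub_self, zero_smul, neg_zero, NormedSpace.exp_zero, Matrix.mul_one, hP1,
        fromCols_mul_fromRows, Matrix.zero_mul, Matrix.mul_one, Matrix.one_mul, add_zero]
    rw [hψ tf, hr tf, hG0, hH0, Matrix.one_mul, Matrix.mulVec_mulVec]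
end

section
/- Let n, m be positive integers, A an n×n real matrix, B an n×m real matrix, Q and Q_f symmetric positive semidefinite n×n real matrices, R a symmetric positive definite m×m real matrix, t_f > 0, and r₀ ∈ ℝⁿ. Define M = [[A, −B R⁻¹ Bᵀ], [−Q, −Aᵀ]], H(t) = [I 0]·exp(−t M)·[I; Q_f], G(t) = [0 I]·exp(−t M)·[I; Q_f], and assume H(t_f) is invertible. Let ψ(t) = G(t_f − t)·H(t_f)⁻¹·r₀, let u(t) = −R⁻¹ Bᵀ ψ(t), and let r(t) = H(t_f − t)·H(t_f)⁻¹·r₀ be its trajectory. Then for every continuous control ũ : [0, t_f] → ℝᵐ and every continuously differentiable trajectory r̃ : [0, t_f] → ℝⁿ satisfying r̃'(t) = A r̃(t) + B ũ(t) on [0, t_f] with r̃(0) = r₀, the cost J(ũ, r̃) = r̃(t_f)ᵀ Q_f r̃(t_f) + ∫₀^{t_f} ( r̃(t)ᵀ Q r̃(t) + ũ(t)ᵀ R ũ(t) ) dt satisfies J(u, r) ≤ J(ũ, r̃); i.e., u is a globally optimal control for the finite-horizon linear-quadratic problem. -/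
open Matrix

private lemma hasDerivAt_dot {k : ℕ} {f g : ℝ → Fin k → ℝ} {f' g' : Fin k → ℝ} {t : ℝ}
    (hf : HasDerivAt f f' t) (hg : HasDerivAt g g' t) :
    HasDerivAt (fun s => f s ⬝ᵥ g s) (f' ⬝ᵥ g t + f t ⬝ᵥ g') t := by
  have hfi := hasDerivAt_pi.mp hf
  have hgi := hasDerivAt_pi.mp hg
  have h : HasDerivAt (fun s => ∑ i : Fin k, f s i * g s i)
      (∑ i : Fin k, (f' i * g t i + f t i * g' i)) t :=
    HasDerivAt.fun_sum fun i _ => (hfi i).mul (hgi i)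
  simpa [dotProduct, Finset.sum_add_distrib] using h

private lemma hasDerivAt_exp_traj {N K : Type*} [Fintype N] [DecidableEq N] [Fintype K]
    {k : ℕ} (M : Matrix N N ℝ) (C : Matrix (Fin k) N ℝ) (D : Matrix N K ℝ) (x : K → ℝ)
    (tf t : ℝ) :
    HasDerivAt (fun s : ℝ => (C * NormedSpace.exp (-((tf - s) • M)) * D).mulVec x)
      ((C * (M * NormedSpace.exp (-((tf - t) • M))) * D).mulVec x) t := by
  letI : NormedAddCommGroup (Matrix N N ℝ) := Matrix.linftyOpNormedAddCommGroup
  letI : NormedRing (Matrix N N ℝ) := Matrix.linftyOpNormedRing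
  letI : NormedAlgebra ℝ (Matrix N N ℝ) := Matrix.linftyOpNormedAlgebra
  have h1 : HasDerivAt (fun u : ℝ => NormedSpace.exp (u • (-M)))
      ((-M) * NormedSpace.exp ((tf - t) • (-M))) (tf - t) :=
    hasDerivAt_exp_smul_const' (-M) (tf - t)
  have h2 : HasDerivAt (fun s : ℝ => tf - s) (-1 : ℝ) t := by
    simpa using (hasDerivAt_id t).const_sub tf
  have h3 : HasDerivAt (fun s : ℝ => NormedSpace.exp ((tf - s) • (-M)))
      ((-1 : ℝ) • ((-M) * NormedSpace.exp ((tf - t) • (-M)))) t := h1.scomp t h2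
  let L : Matrix N N ℝ →ₗ[ℝ] (Fin k → ℝ) :=
    { toFun := fun X => (C * X * D).mulVec x
      map_add' := fun X Y => by simp [Matrix.mul_add, Matrix.add_mul, Matrix.add_mulVec]
      map_smul' := fun c X => by
        simp [Matrix.mul_smul, Matrix.smul_mul, Matrix.smul_mulVec] }
  have h4 := (LinearMap.toContinuousLinearMap L).hasFDerivAt.comp_hasDerivAt t h3
  simp only [smul_neg, neg_mul, neg_smul, one_smul, neg_neg] at h4
  exact h4

private lemma contOn_dot {k : ℕ} {f g : ℝ → Fin k → ℝ} {s : Set ℝ}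
    (hf : ContinuousOn f s) (hg : ContinuousOn g s) :
    ContinuousOn (fun t => f t ⬝ᵥ g t) s :=
  (continuous_fst.dotProduct continuous_snd).comp_continuousOn (hf.prodMk hg)

private lemma contOn_mulVec {k l : ℕ} (Mx : Matrix (Fin k) (Fin l) ℝ) {f : ℝ → Fin l → ℝ}
    {s : Set ℝ} (hf : ContinuousOn f s) :
    ContinuousOn (fun t => Mx.mulVec (f t)) s :=
  (continuous_const.matrix_mulVec continuous_id).comp_continuousOn hf

private lemma fromColumns_add' {k n₁ n₂ : ℕ} (A₁ B₁ : Matrix (Fin k) (Fin n₁) ℝ)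
    (A₂ B₂ : Matrix (Fin k) (Fin n₂) ℝ) :
    fromCols A₁ A₂ + fromCols B₁ B₂ = fromCols (A₁ + B₁) (A₂ + B₂) := by
  ext i j
  cases j <;> simp [Matrix.fromCols]

/-- The control `u(t) = −R⁻¹ Bᵀ ψ(t)` obtained from Pontryagin's
principle (with `ψ` and trajectory `r` built from the Hamiltonian matrix
`M = [[A, −B R⁻¹ Bᵀ], [−Q, −Aᵀ]]`) is globally optimal for the finite-horizon
linear-quadratic problem: its cost is ≤ the cost of any other admissible
continuous control `v` with C¹ trajectory `q` satisfying the dynamics and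
initial condition. -/
theorem stmt_1 (n m : ℕ) (hn : 0 < n) (hm : 0 < m)
    (A : Matrix (Fin n) (Fin n) ℝ) (B : Matrix (Fin n) (Fin m) ℝ)
    (Q Qf : Matrix (Fin n) (Fin n) ℝ) (R : Matrix (Fin m) (Fin m) ℝ)
    (hQ : Q.PosSemidef) (hQf : Qf.PosSemidef) (hR : R.PosDef)
    (tf : ℝ) (htf : 0 < tf) (r₀ : Fin n → ℝ)
    (M : Matrix (Fin n ⊕ Fin n) (Fin n ⊕ Fin n) ℝ)
    (hM : M = Matrix.fromBlocks A (-(B * R⁻¹ * Bᵀ)) (-Q) (-Aᵀ))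
    (H G : ℝ → Matrix (Fin n) (Fin n) ℝ)
    (hH : ∀ t : ℝ, H t =
      Matrix.fromCols (1 : Matrix (Fin n) (Fin n) ℝ) (0 : Matrix (Fin n) (Fin n) ℝ) *
        NormedSpace.exp (-(t • M)) * Matrix.fromRows (1 : Matrix (Fin n) (Fin n) ℝ) Qf)
    (hG : ∀ t : ℝ, G t =
      Matrix.fromCols (0 : Matrix (Fin n) (Fin n) ℝ) (1 : Matrix (Fin n) (Fin n) ℝ) *
        NormedSpace.exp (-(t • M)) * Matrix.fromRows (1 : Matrix (Fin n) (Fin n) ℝ) Qf)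
    (hHtf : IsUnit (H tf))
    (r ψ : ℝ → Fin n → ℝ) (u : ℝ → Fin m → ℝ)
    (hr : ∀ t : ℝ, r t = (H (tf - t) * (H tf)⁻¹).mulVec r₀)
    (hψ : ∀ t : ℝ, ψ t = (G (tf - t) * (H tf)⁻¹).mulVec r₀)
    (hu : ∀ t : ℝ, u t = -((R⁻¹ * Bᵀ).mulVec (ψ t)))
    -- an arbitrary admissible competitor
    (v : ℝ → Fin m → ℝ) (q : ℝ → Fin n → ℝ)
    (hvc : ContinuousOn v (Set.Icc 0 tf))
    (hdyn : ∀ t ∈ Set.Icc (0 : ℝ) tf,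
      HasDerivAt q (A.mulVec (q t) + B.mulVec (v t)) t)
    (hinit : q 0 = r₀) :
    r tf ⬝ᵥ Qf.mulVec (r tf) +
        ∫ t in (0 : ℝ)..tf, (r t ⬝ᵥ Q.mulVec (r t) + u t ⬝ᵥ R.mulVec (u t)) ≤
      q tf ⬝ᵥ Qf.mulVec (q tf) +
        ∫ t in (0 : ℝ)..tf, (q t ⬝ᵥ Q.mulVec (q t) + v t ⬝ᵥ R.mulVec (v t)) := by
  classical
  -- notation
  set C₁ : Matrix (Fin n) (Fin n ⊕ Fin n) ℝ := Matrix.fromCols 1 0 with hC₁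
  set C₂ : Matrix (Fin n) (Fin n ⊕ Fin n) ℝ := Matrix.fromCols 0 1 with hC₂
  set S : Matrix (Fin n) (Fin n) ℝ := -(B * R⁻¹ * Bᵀ) with hS
  set K : Matrix (Fin n ⊕ Fin n) (Fin n) ℝ := Matrix.fromRows 1 Qf * (H tf)⁻¹ with hKdef
  -- basic facts
  have hRinv : R * R⁻¹ = 1 :=
    Matrix.mul_nonsing_inv R ((Matrix.isUnit_iff_isUnit_det R).mp hR.isUnit)
  have hHinv : H tf * (H tf)⁻¹ = 1 :=
    Matrix.mul_nonsing_inv _ ((Matrix.isUnit_iff_isUnit_det _).mp hHtf)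
  have hQs : Qᵀ = Q := by
    rw [← Matrix.conjTranspose_eq_transpose_of_trivial]; exact hQ.1
  have hQfs : Qfᵀ = Qf := by
    rw [← Matrix.conjTranspose_eq_transpose_of_trivial]; exact hQf.1
  have hRs : Rᵀ = R := by
    rw [← Matrix.conjTranspose_eq_transpose_of_trivial]; exact hR.1
  have symdot : ∀ {k : ℕ} (Sm : Matrix (Fin k) (Fin k) ℝ), Smᵀ = Sm →
      ∀ x y : Fin k → ℝ, x ⬝ᵥ Sm.mulVec y = y ⬝ᵥ Sm.mulVec x := by
    intro k Sm hSm x y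
    rw [Matrix.dotProduct_mulVec, ← Matrix.mulVec_transpose, hSm, dotProduct_comm]
  -- rewriting r and ψ through the exponential
  have hrE : ∀ t : ℝ, r t = (C₁ * NormedSpace.exp (-((tf - t) • M)) * K).mulVec r₀ := by
    intro t; rw [hr t, hH (tf - t), hKdef, Matrix.mul_assoc]
  have hψE : ∀ t : ℝ, ψ t = (C₂ * NormedSpace.exp (-((tf - t) • M)) * K).mulVec r₀ := by
    intro t; rw [hψ t, hG (tf - t), hKdef, Matrix.mul_assoc]
  -- block identities
  have hC₁M : C₁ * M = A * C₁ + S * C₂ := by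
    rw [hC₁, hM, Matrix.fromCols_mul_fromBlocks, Matrix.mul_fromCols,
      Matrix.mul_fromCols, fromColumns_add']
    simp
  have hC₂M : C₂ * M = (-Q) * C₁ + (-Aᵀ) * C₂ := by
    rw [hC₂, hM, Matrix.fromCols_mul_fromBlocks, Matrix.mul_fromCols,
      Matrix.mul_fromCols, fromColumns_add']
    simp
  -- generic derivative of a row-block of the flow
  have gen : ∀ (C : Matrix (Fin n) (Fin n ⊕ Fin n) ℝ) (X Y : Matrix (Fin n) (Fin n) ℝ),
      C * M = X * C₁ + Y * C₂ → ∀ t : ℝ,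
      HasDerivAt (fun s : ℝ => (C * NormedSpace.exp (-((tf - s) • M)) * K).mulVec r₀)
        (X.mulVec (r t) + Y.mulVec (ψ t)) t := by
    intro C X Y hCM t
    have h := hasDerivAt_exp_traj M C K r₀ tf t
    convert h using 1
    have key : C * (M * NormedSpace.exp (-((tf - t) • M))) * K
        = X * (C₁ * NormedSpace.exp (-((tf - t) • M)) * K)
          + Y * (C₂ * NormedSpace.exp (-((tf - t) • M)) * K) := by
      rw [← Matrix.mul_assoc C M _, hCM]
      simp only [Matrix.add_mul, Matrix.mul_assoc]
    rw [hrE t, hψE t, Matrix.mulVec_mulVec, Matrix.mulVec_mulVec, ← Matrix.add_mulVec, key]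
  have hrd : ∀ t : ℝ, HasDerivAt r (A.mulVec (r t) + S.mulVec (ψ t)) t := by
    intro t
    have h := gen C₁ A S hC₁M t
    have heq : (fun s : ℝ => (C₁ * NormedSpace.exp (-((tf - s) • M)) * K).mulVec r₀) = r := by
      funext s; rw [hrE s]
    rwa [heq] at h
  have hψd : ∀ t : ℝ, HasDerivAt ψ ((-Q).mulVec (r t) + (-Aᵀ).mulVec (ψ t)) t := by
    intro t
    have h := gen C₂ (-Q) (-Aᵀ) hC₂M t
    have heq : (fun s : ℝ => (C₂ * NormedSpace.exp (-((tf - s) • M)) * K).mulVec r₀) = ψ := by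
      funext s; rw [hψE s]
    rwa [heq] at h
  -- continuity
  have hrc : Continuous r := continuous_iff_continuousAt.mpr fun t => (hrd t).continuousAt
  have hψc : Continuous ψ := continuous_iff_continuousAt.mpr fun t => (hψd t).continuousAt
  have huc : Continuous u := by
    have : u = fun t => -((R⁻¹ * Bᵀ).mulVec (ψ t)) := funext hu
    rw [this]
    exact (continuous_const.matrix_mulVec hψc).neg
  have hqc : ContinuousOn q (Set.Icc 0 tf) := fun t ht =>
    (hdyn t ht).continuousAt.continuousWithinAt
  -- boundary values
  have hr0 : r 0 = r₀ := by
    rw [hr 0, sub_zero, hHinv, Matrix.one_mulVec]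
  have hH0 : H 0 = 1 := by
    rw [hH 0]
    simp [hC₁, Matrix.fromCols_mul_fromRows]
  have hG0 : G 0 = Qf := by
    rw [hG 0]
    simp [hC₂, Matrix.fromCols_mul_fromRows]
  have hrtf : r tf = ((H tf)⁻¹).mulVec r₀ := by
    rw [hr tf, sub_self, hH0, Matrix.one_mul]
  have hψtf : ψ tf = Qf.mulVec (r tf) := by
    rw [hψ tf, sub_self, hG0, hrtf, Matrix.mulVec_mulVec]
  -- key control identities
  have hRu : ∀ t : ℝ, R.mulVec (u t) = -(Bᵀ.mulVec (ψ t)) := by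
    intro t
    rw [hu t, Matrix.mulVec_neg, Matrix.mulVec_mulVec, ← Matrix.mul_assoc, hRinv,
      Matrix.one_mul]
  have hBu : ∀ t : ℝ, B.mulVec (u t) = S.mulVec (ψ t) := by
    intro t
    rw [hu t, Matrix.mulVec_neg, Matrix.mulVec_mulVec, hS, Matrix.neg_mulVec,
      Matrix.mul_assoc]
  have hψB : ∀ (t : ℝ) (x : Fin m → ℝ), ψ t ⬝ᵥ B.mulVec x = -(R.mulVec (u t) ⬝ᵥ x) := by
    intro t x
    rw [Matrix.dotProduct_mulVec, ← Matrix.mulVec_transpose, hRu t]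
    simp
  have hψA : ∀ (t : ℝ) (x : Fin n → ℝ), ψ t ⬝ᵥ A.mulVec x = Aᵀ.mulVec (ψ t) ⬝ᵥ x := by
    intro t x
    rw [Matrix.dotProduct_mulVec, ← Matrix.mulVec_transpose]
  -- the correction term W and its derivative
  set W : ℝ → ℝ := fun t => ψ t ⬝ᵥ (q t - r t) with hW
  set W' : ℝ → ℝ := fun t =>
    -(Q.mulVec (r t) ⬝ᵥ (q t - r t)) - R.mulVec (u t) ⬝ᵥ (v t - u t) with hW'
  have hWd : ∀ t ∈ Set.uIcc (0 : ℝ) tf, HasDerivAt W (W' t) t := by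
    intro t ht
    rw [Set.uIcc_of_le htf.le] at ht
    have hΔd : HasDerivAt (fun s => q s - r s)
        ((A.mulVec (q t) + B.mulVec (v t)) - (A.mulVec (r t) + S.mulVec (ψ t))) t :=
      (hdyn t ht).sub (hrd t)
    have h := hasDerivAt_dot (hψd t) hΔd
    convert h using 1
    rw [hW']
    have e1 : ψ t ⬝ᵥ ((A.mulVec (q t) + B.mulVec (v t)) - (A.mulVec (r t) + S.mulVec (ψ t)))
        = Aᵀ.mulVec (ψ t) ⬝ᵥ (q t - r t) - R.mulVec (u t) ⬝ᵥ (v t - u t) := by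
      rw [← hBu t]
      simp only [dotProduct_sub, dotProduct_add, hψA, hψB]
      ring
    have e2 : ((-Q).mulVec (r t) + (-Aᵀ).mulVec (ψ t)) ⬝ᵥ (q t - r t)
        = -(Q.mulVec (r t) ⬝ᵥ (q t - r t)) - Aᵀ.mulVec (ψ t) ⬝ᵥ (q t - r t) := by
      simp only [Matrix.neg_mulVec, add_dotProduct, neg_dotProduct]
      ring
    rw [e1, e2]
    ring
  -- integrands
  set g : ℝ → ℝ := fun t =>
    (q t - r t) ⬝ᵥ Q.mulVec (q t - r t) + (v t - u t) ⬝ᵥ R.mulVec (v t - u t) with hg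
  -- pointwise identity
  have hpt : ∀ t : ℝ,
      (q t ⬝ᵥ Q.mulVec (q t) + v t ⬝ᵥ R.mulVec (v t))
        - (r t ⬝ᵥ Q.mulVec (r t) + u t ⬝ᵥ R.mulVec (u t))
      = g t - 2 * W' t := by
    intro t
    have c1 : Q.mulVec (r t) ⬝ᵥ q t = r t ⬝ᵥ Q.mulVec (q t) := by
      rw [dotProduct_comm, Matrix.dotProduct_mulVec, ← Matrix.mulVec_transpose, hQs,
        dotProduct_comm]
    have c2 : Q.mulVec (r t) ⬝ᵥ r t = r t ⬝ᵥ Q.mulVec (r t) := dotProduct_comm _ _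
    have c3 : q t ⬝ᵥ Q.mulVec (r t) = r t ⬝ᵥ Q.mulVec (q t) := symdot Q hQs _ _
    have c4 : R.mulVec (u t) ⬝ᵥ v t = u t ⬝ᵥ R.mulVec (v t) := by
      rw [dotProduct_comm, Matrix.dotProduct_mulVec, ← Matrix.mulVec_transpose, hRs,
        dotProduct_comm]
    have c5 : R.mulVec (u t) ⬝ᵥ u t = u t ⬝ᵥ R.mulVec (u t) := dotProduct_comm _ _
    have c6 : v t ⬝ᵥ R.mulVec (u t) = u t ⬝ᵥ R.mulVec (v t) := symdot R hRs _ _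
    rw [hg, hW']
    simp only [Matrix.mulVec_sub, dotProduct_sub, sub_dotProduct]
    rw [c1, c2, c3, c4, c5, c6]
    ring
  -- integrability
  have huIcc : Set.uIcc (0 : ℝ) tf = Set.Icc 0 tf := Set.uIcc_of_le htf.le
  have hΔcon : ContinuousOn (fun t => q t - r t) (Set.Icc 0 tf) := hqc.sub hrc.continuousOn
  have hwcon : ContinuousOn (fun t => v t - u t) (Set.Icc 0 tf) := hvc.sub huc.continuousOn
  have hIq : IntervalIntegrable (fun t => q t ⬝ᵥ Q.mulVec (q t) + v t ⬝ᵥ R.mulVec (v t))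
      MeasureTheory.volume 0 tf := by
    apply ContinuousOn.intervalIntegrable
    rw [huIcc]
    exact (contOn_dot hqc (contOn_mulVec Q hqc)).add (contOn_dot hvc (contOn_mulVec R hvc))
  have hIr : IntervalIntegrable (fun t => r t ⬝ᵥ Q.mulVec (r t) + u t ⬝ᵥ R.mulVec (u t))
      MeasureTheory.volume 0 tf := by
    apply ContinuousOn.intervalIntegrable
    rw [huIcc]
    exact (contOn_dot hrc.continuousOn (contOn_mulVec Q hrc.continuousOn)).add
      (contOn_dot huc.continuousOn (contOn_mulVec R huc.continuousOn))
  have hIg : IntervalIntegrable g MeasureTheory.volume 0 tf := by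
    apply ContinuousOn.intervalIntegrable
    rw [huIcc, hg]
    exact (contOn_dot hΔcon (contOn_mulVec Q hΔcon)).add
      (contOn_dot hwcon (contOn_mulVec R hwcon))
  have hIW' : IntervalIntegrable W' MeasureTheory.volume 0 tf := by
    apply ContinuousOn.intervalIntegrable
    rw [huIcc, hW']
    exact ((contOn_dot (contOn_mulVec Q hrc.continuousOn) hΔcon).neg).sub
      (contOn_dot (contOn_mulVec R huc.continuousOn) hwcon)
  -- FTC
  have hW0 : W 0 = 0 := by
    rw [hW]
    simp [hinit, hr0]
  have hFTC : ∫ t in (0 : ℝ)..tf, W' t = W tf := by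
    rw [intervalIntegral.integral_eq_sub_of_hasDerivAt hWd hIW', hW0, sub_zero]
  -- split the integral difference
  have hsplit :
      (∫ t in (0 : ℝ)..tf, (q t ⬝ᵥ Q.mulVec (q t) + v t ⬝ᵥ R.mulVec (v t)))
        - (∫ t in (0 : ℝ)..tf, (r t ⬝ᵥ Q.mulVec (r t) + u t ⬝ᵥ R.mulVec (u t)))
      = (∫ t in (0 : ℝ)..tf, g t) - 2 * W tf := by
    rw [← intervalIntegral.integral_sub hIq hIr]
    have : (fun t => (q t ⬝ᵥ Q.mulVec (q t) + v t ⬝ᵥ R.mulVec (v t))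
        - (r t ⬝ᵥ Q.mulVec (r t) + u t ⬝ᵥ R.mulVec (u t)))
        = fun t => g t - 2 * W' t := funext hpt
    rw [this, intervalIntegral.integral_sub hIg (hIW'.const_mul 2),
      intervalIntegral.integral_const_mul, hFTC]
  -- endpoint identity
  have hend : q tf ⬝ᵥ Qf.mulVec (q tf) - r tf ⬝ᵥ Qf.mulVec (r tf)
      = (q tf - r tf) ⬝ᵥ Qf.mulVec (q tf - r tf) + 2 * W tf := by
    have hWtf : W tf = Qf.mulVec (r tf) ⬝ᵥ (q tf - r tf) := by
      simp only [hW]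
      rw [hψtf]
    have c1 : Qf.mulVec (r tf) ⬝ᵥ q tf = r tf ⬝ᵥ Qf.mulVec (q tf) := by
      rw [dotProduct_comm, Matrix.dotProduct_mulVec, ← Matrix.mulVec_transpose, hQfs,
        dotProduct_comm]
    have c2 : Qf.mulVec (r tf) ⬝ᵥ r tf = r tf ⬝ᵥ Qf.mulVec (r tf) := dotProduct_comm _ _
    have c3 : q tf ⬝ᵥ Qf.mulVec (r tf) = r tf ⬝ᵥ Qf.mulVec (q tf) := symdot Qf hQfs _ _
    rw [hWtf]
    simp only [Matrix.mulVec_sub, dotProduct_sub, sub_dotProduct]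
    rw [c1, c2, c3]
    ring
  -- positivity
  have hgnn : 0 ≤ ∫ t in (0 : ℝ)..tf, g t := by
    apply intervalIntegral.integral_nonneg htf.le
    intro s _
    simp only [hg]
    have h1 : 0 ≤ (q s - r s) ⬝ᵥ Q.mulVec (q s - r s) := by
      simpa using hQ.dotProduct_mulVec_nonneg (q s - r s)
    have h2 : 0 ≤ (v s - u s) ⬝ᵥ R.mulVec (v s - u s) := by
      simpa using hR.posSemidef.dotProduct_mulVec_nonneg (v s - u s)
    linarith
  have hQfnn : 0 ≤ (q tf - r tf) ⬝ᵥ Qf.mulVec (q tf - r tf) := by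
    simpa using hQf.dotProduct_mulVec_nonneg (q tf - r tf)
  linarith [hsplit, hend, hgnn, hQfnn]
end
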